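/- Let G = C_g(T_1, T_2, …, T_g) be a unicyclic graph with n vertices. Then Sz*_e(G) = Sz_e(G) + (1/4)·n(2n−1) + (1/4)·(2n−3)·g + δ(g)·[ (1/4)·g(5−4n) + (n²−n)/2 − (1/4)·Σ_{i=1}^g |E(T_i)|² ], where δ(g) = 1 if g is odd and δ(g) = 0 if g is even. -/

import Mathlib

set_option linter.unusedSectionVars false

namespace RevSzeged

open Finset

/-- A finite graph with a distinguished root vertex. -/
structure RootedGraph : Type 1 where
  V : Type
  fintypeV : Fintype V
  decEqV : DecidableEq V
  G : SimpleGraph V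
  root : V

attribute [instance] RootedGraph.fintypeV RootedGraph.decEqV

section Index

variable {V : Type} [Fintype V] [DecidableEq V]

/-- The finset of edges of a graph on a finite vertex type. -/
noncomputable def edgeFinset' (G : SimpleGraph V) : Finset (Sym2 V) :=
  (G.edgeSet.toFinite).toFinset

/-- The number of edges of `G`. -/
noncomputable def numEdges (G : SimpleGraph V) : ℕ := (edgeFinset' G).card

/-- Distance from an edge `f` to a vertex `w` : the minimum of the distances
from the two endpoints of `f` to `w`. -/
noncomputable def evDist (G : SimpleGraph V) (f : Sym2 V) (w : V) : ℕ :=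
  Sym2.lift ⟨fun x y => min (G.dist x w) (G.dist y w), fun _ _ => min_comm _ _⟩ f

open scoped Classical in
/-- `mA G u v` = the number of edges of `G` strictly closer to `u` than to `v`. -/
noncomputable def mA (G : SimpleGraph V) (u v : V) : ℕ :=
  ((edgeFinset' G).filter (fun f => evDist G f u < evDist G f v)).card

open scoped Classical in
/-- `m0 G u v` = the number of edges of `G` equidistant from `u` and `v`. -/
noncomputable def m0 (G : SimpleGraph V) (u v : V) : ℕ :=
  ((edgeFinset' G).filter (fun f => evDist G f u = evDist G f v)).card

lemma m0_comm (G : SimpleGraph V) (u v : V) : m0 G u v = m0 G v u := by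
  classical
  unfold m0
  congr 1
  ext f
  simp only [Finset.mem_filter]
  exact and_congr_right fun _ => eq_comm

/-- The summand of the revised edge Szeged index attached to an edge. -/
noncomputable def szContrib (G : SimpleGraph V) : Sym2 V → ℚ :=
  Sym2.lift ⟨fun u v =>
      ((mA G u v : ℚ) + (m0 G u v : ℚ) / 2) * ((mA G v u : ℚ) + (m0 G u v : ℚ) / 2),
    fun u v => by dsimp only; rw [m0_comm G u v]; ring⟩

/-- The revised edge Szeged index `Sz*_e`. -/
noncomputable def revEdgeSzeged (G : SimpleGraph V) : ℚ :=
  ∑ e ∈ edgeFinset' G, szContrib G e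

/-- The summand of the edge Szeged index attached to an edge. -/
noncomputable def eSzContrib (G : SimpleGraph V) : Sym2 V → ℚ :=
  Sym2.lift ⟨fun u v => (mA G u v : ℚ) * (mA G v u : ℚ), fun u v => by dsimp only; ring⟩

/-- The edge Szeged index `Sz_e`. -/
noncomputable def edgeSzeged (G : SimpleGraph V) : ℚ :=
  ∑ e ∈ edgeFinset' G, eSzContrib G e

/-- The diameter of `G` equals `d` : every distance is at most `d` and some distance equals `d`. -/
def hasDiam (G : SimpleGraph V) (d : ℕ) : Prop :=
  (∀ u v : V, G.dist u v ≤ d) ∧ ∃ u v : V, G.dist u v = d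

/-- A unicyclic graph: connected with exactly one cycle, equivalently connected with
as many edges as vertices. -/
def IsUnicyclic (G : SimpleGraph V) : Prop :=
  G.Connected ∧ numEdges G = Fintype.card V

end Index

/-- The graph induced by a parent function: `x` is adjacent to `y` iff they are distinct and
one is the parent of the other. -/
def graphOfParent {W : Type} (par : W → W) : SimpleGraph W where
  Adj x y := x ≠ y ∧ (par x = y ∨ par y = x)
  symm := by constructor; rintro x y ⟨h1, h2⟩; exact ⟨Ne.symm h1, Or.symm h2⟩
  loopless := ⟨fun x h => h.1 rfl⟩

/-- Vertex type for the generic tree: a root (`none`), a first path with `k1` vertices,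
a second path with `k2` vertices and `b` pendant vertices. -/
abbrev genTreeV (k1 k2 b : ℕ) : Type := Option (Fin k1 ⊕ Fin k2 ⊕ Fin b)

/-- Parent function of the generic tree `genTree k1 k2 b j`:  the two paths hang off
the root, and the `b` pendant vertices are attached to the vertex of the first path at
distance `j` from the root (to the root itself if `j = 0`). -/
def genTreePar (k1 k2 b j : ℕ) : genTreeV k1 k2 b → genTreeV k1 k2 b
  | none => none
  | some (Sum.inl p) =>
      if 0 < p.val then
        some (Sum.inl ⟨p.val - 1, lt_of_le_of_lt (Nat.sub_le _ _) p.isLt⟩)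
      else none
  | some (Sum.inr (Sum.inl q)) =>
      if 0 < q.val then
        some (Sum.inr (Sum.inl ⟨q.val - 1, lt_of_le_of_lt (Nat.sub_le _ _) q.isLt⟩))
      else none
  | some (Sum.inr (Sum.inr _)) =>
      if h : 0 < j ∧ j - 1 < k1 then some (Sum.inl ⟨j - 1, h.2⟩) else none

/-- The generic rooted tree: a root with two paths of lengths `k1`, `k2` hanging from it and
`b` pendant vertices attached at distance `j` along the first path. -/
def genTree (k1 k2 b j : ℕ) : RootedGraph where
  V := genTreeV k1 k2 b
  fintypeV := inferInstance
  decEqV := inferInstance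
  G := graphOfParent (genTreePar k1 k2 b j)
  root := none

/-- `P_m`: the path on `m` vertices rooted at one endpoint. -/
def pathRT (m : ℕ) : RootedGraph := genTree (m - 1) 0 0 0

/-- `S_m`: the star on `m` vertices rooted at its center. -/
def starRT (m : ℕ) : RootedGraph := genTree 0 0 (m - 1) 0

/-- `P^i_{k1,k2}`: two paths on `k1+1` and `k2+1` vertices and a star `S_{i+1}` glued at
a common root. -/
def PP (k1 k2 i : ℕ) : RootedGraph := genTree k1 k2 i 0

/-- `P^i_k = P^i_{k,0}`. -/
def Pk (k i : ℕ) : RootedGraph := genTree k 0 i 0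

/-- `T*(l2, b, i)`: the tree obtained from a path `w_0 w_1 ⋯ w_{l2}`, rooted at `w_{l2}`,
by attaching `b` pendant vertices at `w_i`. -/
def Tstar (l2 b i : ℕ) : RootedGraph := genTree l2 0 b (l2 - i)

/-- `C_g(T_1, …, T_g)` : the unicyclic graph obtained from the cycle `C_g` by identifying
the root of `T_i` with the `i`-th cycle vertex. -/
def cycleTrees (g : ℕ) (T : Fin g → RootedGraph) : SimpleGraph (Σ i, (T i).V) where
  Adj a b := a ≠ b ∧
    ((∃ (i : Fin g) (x y : (T i).V), a = ⟨i, x⟩ ∧ b = ⟨i, y⟩ ∧ (T i).G.Adj x y) ∨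
     (a.2 = (T a.1).root ∧ b.2 = (T b.1).root ∧
       (((a.1 : ℕ) + 1) % g = (b.1 : ℕ) ∨ ((b.1 : ℕ) + 1) % g = (a.1 : ℕ))))
  symm := by
    constructor
    rintro a b ⟨hne, h⟩
    refine ⟨hne.symm, ?_⟩
    rcases h with ⟨i, x, y, ha, hb, hxy⟩ | ⟨h1, h2, h3⟩
    · exact Or.inl ⟨i, y, x, hb, ha, hxy.symm⟩
    · exact Or.inr ⟨h2, h1, h3.symm⟩
  loopless := ⟨fun a h => h.1 rfl⟩




section Aux

open Fin.NatCast Fin.CommRing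

open SimpleGraph

open SimpleGraph

section Generic
variable {V : Type} {G : SimpleGraph V}

/-- Lipschitz lower bound along a walk. -/
lemma lip_walk (f : V → ℕ) (hf : ∀ u v, G.Adj u v → f u ≤ f v + 1) :
    ∀ {u v : V} (p : G.Walk u v), f u ≤ f v + p.length := by
  intro u v p
  induction p with
  | nil => simp
  | cons h q ih =>
      simp only [Walk.length_cons]
      have := hf _ _ h
      omega

lemma lip_dist (f : V → ℕ) (hf : ∀ u v, G.Adj u v → f u ≤ f v + 1)
    {u v : V} (h : G.Reachable u v) : f u ≤ f v + G.dist u v := by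
  obtain ⟨p, hp⟩ := h.exists_walk_length_eq_dist
  simpa [hp] using lip_walk f hf p

/-- any walk passing through `m` has length at least `d u m + d m v`. -/
lemma length_ge_of_mem_support [DecidableEq V] {u v m : V} (p : G.Walk u v)
    (h : m ∈ p.support) : G.dist u m + G.dist m v ≤ p.length := by
  have hsplit : (p.takeUntil m h).length + (p.dropUntil m h).length = p.length := by
    have := congrArg Walk.length (p.take_spec h); rwa [Walk.length_append] at this
  have h1 := SimpleGraph.dist_le (p.takeUntil m h)
  have h2 := SimpleGraph.dist_le (p.dropUntil m h)
  omega

/-- every vertex is on one of the two sides of an edge. -/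
lemma reachable_side {x y : V} (hxy : G.Adj x y) {z : V} (hz : G.Reachable z x) :
    (G \ fromEdgeSet {s(x,y)}).Reachable z x ∨ (G \ fromEdgeSet {s(x,y)}).Reachable z y := by
  obtain ⟨p⟩ := hz
  induction p with
  | nil => exact Or.inl (Reachable.refl _)
  | @cons a b c hab q ih =>
      by_cases he : s(a,b) = s(c,y)
      · rw [Sym2.eq_iff] at he
        rcases he with ⟨h1, h2⟩ | ⟨h1, h2⟩
        · exact Or.inl (h1 ▸ Reachable.refl a)
        · exact Or.inr (h1 ▸ Reachable.refl a)
      · have hadj : (G \ fromEdgeSet {s(c,y)}).Adj a b := by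
          rw [sdiff_adj]
          refine ⟨hab, ?_⟩
          rw [fromEdgeSet_adj]
          rintro ⟨h1, -⟩
          exact he (Set.mem_singleton_iff.mp h1)
        rcases ih hxy with h | h
        · exact Or.inl (Reachable.trans ⟨Walk.cons hadj Walk.nil⟩ h)
        · exact Or.inr (Reachable.trans ⟨Walk.cons hadj Walk.nil⟩ h)

/-- on the x-side of a bridge, distance to `y` is distance to `x` plus one. -/
lemma bridge_side_dist [DecidableEq V] (hconn : G.Connected) {x y : V}
    (hb : G.IsBridge s(x,y)) {z : V}
    (hz : (G \ fromEdgeSet {s(x,y)}).Reachable z x) :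
    G.dist z y = G.dist z x + 1 := by
  have hxy : G.Adj x y := hb.reachable_iff_adj.mp (hconn x y)
  have hne : x ≠ y := hxy.ne
  have hub : G.dist z y ≤ G.dist z x + 1 := by
    calc G.dist z y ≤ G.dist z x + G.dist x y := hconn.dist_triangle
    _ ≤ G.dist z x + 1 := by
        have := SimpleGraph.dist_le (Walk.cons hxy Walk.nil); simp at this; omega
  have hlb : G.dist z x + 1 ≤ G.dist z y := by
    obtain ⟨p, hp⟩ := (hconn z y).exists_walk_length_eq_dist
    by_cases he : s(x,y) ∈ p.edges
    · have hxs : x ∈ p.support := Walk.fst_mem_support_of_mem_edges p he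
      have := length_ge_of_mem_support p hxs
      have hdxy : 1 ≤ G.dist x y := by
        have h0 : G.dist x y ≠ 0 := fun h =>
          hne ((hconn.dist_eq_zero_iff).mp h)
        omega
      omega
    · exfalso
      have : (G \ fromEdgeSet {s(x,y)}).Reachable z y := by
        refine ⟨p.transfer _ ?_⟩
        intro e hep
        have heG : e ∈ G.edgeSet := p.edges_subset_edgeSet hep
        rw [SimpleGraph.edgeSet_sdiff, SimpleGraph.edgeSet_fromEdgeSet]
        refine ⟨heG, ?_⟩
        simp only [Set.mem_diff, Set.mem_setOf_eq, Set.mem_singleton_iff]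
        rintro ⟨rfl, -⟩
        exact he hep
      exact hb (hz.symm.trans this)
  omega

/-- in a tree, for an edge `xy`, every vertex lies strictly on one side. -/
lemma tree_side [DecidableEq V] (ht : G.IsTree) {x y : V} (hxy : G.Adj x y) (z : V) :
    ((G \ fromEdgeSet {s(x,y)}).Reachable z x ∧ G.dist z y = G.dist z x + 1) ∨
    ((G \ fromEdgeSet {s(x,y)}).Reachable z y ∧ G.dist z x = G.dist z y + 1) := by
  have hb : G.IsBridge s(x,y) := isAcyclic_iff_forall_adj_isBridge.mp ht.IsAcyclic hxy
  rcases reachable_side hxy (ht.isConnected z x) with h | h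
  · exact Or.inl ⟨h, bridge_side_dist ht.isConnected hb h⟩
  · have hb' : G.IsBridge s(y,x) := by rwa [Sym2.eq_swap] at hb
    have h' : (G \ fromEdgeSet {s(y,x)}).Reachable z y := by rwa [Sym2.eq_swap]
    exact Or.inr ⟨h, by simpa using bridge_side_dist ht.isConnected hb' h'⟩

/-- in a tree, no vertex is equidistant from the two ends of an edge. -/
lemma tree_no_tie [DecidableEq V] (ht : G.IsTree) {x y : V} (hxy : G.Adj x y) (z : V) :
    G.dist z x ≠ G.dist z y := by
  rcases tree_side ht hxy z with ⟨-, h⟩ | ⟨-, h⟩ <;> omega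

/-- in a tree, two distinct edges are never "tied": the edge-to-vertex distances
from `f = s(z,z')` to the ends of `e = s(x,y)` differ. -/
lemma tree_edge_no_tie [DecidableEq V] (ht : G.IsTree) {x y z z' : V} (hxy : G.Adj x y)
    (hzz' : G.Adj z z') (hne : s(z,z') ≠ s(x,y)) :
    min (G.dist z x) (G.dist z' x) ≠ min (G.dist z y) (G.dist z' y) := by
  have hadj' : (G \ fromEdgeSet {s(x,y)}).Adj z z' := by
    rw [sdiff_adj]
    exact ⟨hzz', by rw [fromEdgeSet_adj]; rintro ⟨h1, -⟩; exact hne h1⟩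
  rcases tree_side ht hxy z with ⟨hr, h⟩ | ⟨hr, h⟩ <;>
    rcases tree_side ht hxy z' with ⟨hr', h'⟩ | ⟨hr', h'⟩
  · omega
  · exfalso
    have hb : G.IsBridge s(x,y) := isAcyclic_iff_forall_adj_isBridge.mp ht.IsAcyclic hxy
    exact hb (hr.symm.trans ((Reachable.trans ⟨Walk.cons hadj' Walk.nil⟩ hr')))
  · exfalso
    have hb : G.IsBridge s(x,y) := isAcyclic_iff_forall_adj_isBridge.mp ht.IsAcyclic hxy
    exact hb ((hr'.symm.trans ((Reachable.trans ⟨(Walk.cons hadj' Walk.nil).reverse⟩ hr))))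
  · omega

end Generic

open SimpleGraph Finset

section Reduction
variable {V : Type} [Fintype V] [DecidableEq V]

lemma mem_edgeFinset' {G : SimpleGraph V} {e : Sym2 V} :
    e ∈ edgeFinset' G ↔ e ∈ G.edgeSet := Set.Finite.mem_toFinset _

/-- symmetric version of m0 on Sym2. -/
noncomputable def m0S (G : SimpleGraph V) : Sym2 V → ℕ :=
  Sym2.lift ⟨m0 G, m0_comm G⟩

lemma m0S_mk (G : SimpleGraph V) (u v : V) : m0S G s(u,v) = m0 G u v := rfl

open scoped Classical in
lemma trichotomy (G : SimpleGraph V) (u v : V) :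
    mA G u v + mA G v u + m0 G u v = numEdges G := by
  classical
  unfold mA m0 numEdges
  rw [Finset.filter_congr_decidable, Finset.filter_congr_decidable,
    Finset.filter_congr_decidable]
  have h1 := Finset.card_filter_add_card_filter_not
    (s := edgeFinset' G) (p := fun f => evDist G f u < evDist G f v)
  have h2 := Finset.card_filter_add_card_filter_not
    (s := (edgeFinset' G).filter (fun f => ¬ evDist G f u < evDist G f v))
    (p := fun f => evDist G f v < evDist G f u)
  rw [Finset.filter_filter, Finset.filter_filter] at h2
  have e1 : ((edgeFinset' G).filter fun f => ¬evDist G f u < evDist G f v ∧ evDist G f v < evDist G f u)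
      = (edgeFinset' G).filter (fun f => evDist G f v < evDist G f u) := by
    apply Finset.filter_congr; intro f _; constructor
    · rintro ⟨-, h⟩; exact h
    · intro h; exact ⟨by omega, h⟩
  have e2 : ((edgeFinset' G).filter fun f => ¬evDist G f u < evDist G f v ∧ ¬evDist G f v < evDist G f u)
      = (edgeFinset' G).filter (fun f => evDist G f u = evDist G f v) := by
    apply Finset.filter_congr; intro f _; constructor
    · rintro ⟨h1, h2⟩; omega
    · intro h; omega
  rw [e1, e2] at h2
  omega

lemma szContrib_mk (G : SimpleGraph V) (u v : V) :
    szContrib G s(u,v) =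
      ((mA G u v : ℚ) + (m0 G u v : ℚ) / 2) * ((mA G v u : ℚ) + (m0 G u v : ℚ) / 2) := rfl

lemma eSzContrib_mk (G : SimpleGraph V) (u v : V) :
    eSzContrib G s(u,v) = (mA G u v : ℚ) * (mA G v u : ℚ) := rfl

/-- Key reduction: the difference of indices only depends on `m0`. -/
lemma rev_sub_edge (G : SimpleGraph V) :
    revEdgeSzeged G = edgeSzeged G +
      ∑ e ∈ edgeFinset' G,
        ((numEdges G : ℚ) / 2 * (m0S G e : ℚ) - (m0S G e : ℚ)^2 / 4) := by
  unfold revEdgeSzeged edgeSzeged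
  rw [← Finset.sum_add_distrib]
  apply Finset.sum_congr rfl
  intro e he
  induction e with
  | _ u v =>
    rw [szContrib_mk, eSzContrib_mk, m0S_mk]
    have ht := trichotomy G u v
    have : (mA G u v : ℚ) + (mA G v u : ℚ) + (m0 G u v : ℚ) = (numEdges G : ℚ) := by
      exact_mod_cast congrArg (fun x : ℕ => (x : ℚ)) ht
    linear_combination ((m0 G u v : ℚ)/2) * this

end Reduction

/-- cyclic distance between positions on the cycle. -/
def dC {g : ℕ} (c a : Fin g) : ℕ := min ((a - c).val) ((c - a).val)

section FinArith
variable {g : ℕ} [NeZero g]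

lemma val_one_fin (hg : 1 < g) : ((1 : Fin g)).val = 1 := by
  have : ((1:ℕ) : Fin g) = (1 : Fin g) := by norm_cast
  rw [← this, Fin.val_cast_of_lt hg]

lemma sub_add_cancel_left' (a b : Fin g) : a - (a + b) = -b := by
  rw [sub_add_eq_sub_sub, sub_self, zero_sub]

lemma dC_offset (a : Fin g) (k : ℕ) (hk : k < g) :
    dC (a + (k : Fin g)) a = min k (g - k) := by
  unfold dC
  rw [add_sub_cancel_left, sub_add_cancel_left']
  rw [Fin.val_cast_of_lt hk, Fin.neg_def]
  simp only [Fin.val_cast_of_lt hk]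
  rcases Nat.eq_zero_or_pos k with rfl | hpos
  · simp
  · rw [Nat.mod_eq_of_lt (by omega)]
    omega

lemma fin_decomp (c a : Fin g) : ∃ k : ℕ, k < g ∧ c = a + (k : Fin g) := by
  refine ⟨(c - a).val, (c - a).isLt, ?_⟩
  rw [Fin.cast_val_eq_self]
  rw [add_sub_cancel]

lemma offset_succ (a : Fin g) (k : ℕ) (hk : 1 ≤ k) :
    a + (k : Fin g) = (a + 1) + ((k - 1 : ℕ) : Fin g) := by
  obtain ⟨m, rfl⟩ := Nat.exists_eq_add_of_le hk
  rw [add_assoc]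
  congr 1
  simp only [Nat.add_sub_cancel_left]
  push_cast
  ring

lemma offset_zero_alt (a : Fin g) : a = (a + 1) + ((g - 1 : ℕ) : Fin g) := by
  have hge : 1 ≤ g := Nat.one_le_iff_ne_zero.mpr (NeZero.ne g)
  rw [add_assoc]
  have : (1 : Fin g) + ((g - 1 : ℕ) : Fin g) = ((1 + (g-1) : ℕ) : Fin g) := by push_cast; ring
  rw [this]
  have : (1 + (g - 1) : ℕ) = g := by omega
  rw [this, Fin.natCast_self, add_zero]

lemma dC_self (a : Fin g) : dC a a = 0 := by unfold dC; simp

/-- closed form for the two relevant cyclic distances, in terms of the offset. -/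
lemma dC_offsets (hg : 3 ≤ g) (a : Fin g) (k : ℕ) (hk : k < g) :
    dC (a + (k : Fin g)) a = min k (g - k) ∧
    dC (a + (k : Fin g)) (a + 1) = (if k = 0 then 1 else min (k-1) (g - (k-1))) := by
  constructor
  · exact dC_offset a k hk
  · rcases Nat.eq_zero_or_pos k with rfl | hpos
    · have h0 : a + ((0:ℕ) : Fin g) = (a+1) + ((g-1 : ℕ) : Fin g) := by
        rw [Nat.cast_zero, add_zero]; exact offset_zero_alt a
      rw [h0, dC_offset (a+1) (g-1) (by omega), if_pos rfl]
      omega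
    · rw [if_neg (by omega), offset_succ a k hpos]
      exact dC_offset (a+1) (k-1) (by omega)

lemma fin_add_one_iff_mod (i j : Fin g) (hg : 1 < g) :
    ((i.val + 1) % g = j.val) ↔ j = i + 1 := by
  rw [Fin.ext_iff, Fin.val_add, val_one_fin hg]
  omega

lemma fin_one_ne_zero (hg : 3 ≤ g) : (1 : Fin g) ≠ 0 := by
  intro h
  have h1 := val_one_fin (show 1 < g by omega)
  rw [h, Fin.val_zero] at h1
  exact one_ne_zero h1.symm

lemma fin_add_one_ne (hg : 3 ≤ g) (a : Fin g) : a ≠ a + 1 := by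
  intro h
  have : (0 : Fin g) = 1 := by
    have := add_left_cancel (a := a) (b := (0:Fin g)) (c := (1:Fin g)) (by rw [add_zero, ← h])
    exact this
  exact fin_one_ne_zero hg this.symm

end FinArith

open SimpleGraph

section Graph
variable {g : ℕ} [NeZero g] (T : Fin g → RootedGraph)

/-- the root vertex of the `i`-th fiber. -/
def rt (i : Fin g) : (Σ i, (T i).V) := ⟨i, (T i).root⟩

/-- tree distance inside the `i`-th fiber. -/
noncomputable def dT (i : Fin g) (x y : (T i).V) : ℕ := (T i).G.dist x y

variable {T}

lemma sigma_mk_ne {i : Fin g} {x y : (T i).V} (h : x ≠ y) :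
    (⟨i, x⟩ : Σ i, (T i).V) ≠ ⟨i, y⟩ := by
  intro hc
  exact h (eq_of_heq (Sigma.mk.inj_iff.mp hc).2)

lemma adj_tree {i : Fin g} {x y : (T i).V} (h : (T i).G.Adj x y) :
    (cycleTrees g T).Adj ⟨i,x⟩ ⟨i,y⟩ :=
  ⟨sigma_mk_ne h.ne, Or.inl ⟨i, x, y, rfl, rfl, h⟩⟩

lemma adj_cyc (hg : 3 ≤ g) (i : Fin g) :
    (cycleTrees g T).Adj (rt T i) (rt T (i+1)) := by
  refine ⟨?_, Or.inr ⟨rfl, rfl, Or.inl ?_⟩⟩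
  · intro hc
    exact fin_add_one_ne hg i (congrArg Sigma.fst hc)
  · exact (fin_add_one_iff_mod i (i+1) (by omega)).mpr rfl

lemma adj_cases (hg : 3 ≤ g) {w w' : Σ i, (T i).V} (h : (cycleTrees g T).Adj w w') :
    (∃ (i : Fin g) (x y : (T i).V), w = ⟨i,x⟩ ∧ w' = ⟨i,y⟩ ∧ (T i).G.Adj x y) ∨
    (w.2 = (T w.1).root ∧ w'.2 = (T w'.1).root ∧ (w'.1 = w.1 + 1 ∨ w.1 = w'.1 + 1)) := by
  obtain ⟨-, hcase⟩ := h
  rcases hcase with h | ⟨h1, h2, h3⟩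
  · exact Or.inl h
  · refine Or.inr ⟨h1, h2, ?_⟩
    rcases h3 with h3 | h3
    · exact Or.inl ((fin_add_one_iff_mod w.1 w'.1 (by omega)).mp h3)
    · exact Or.inr ((fin_add_one_iff_mod w'.1 w.1 (by omega)).mp h3)

/-- embedding of the `i`-th tree. -/
def homT (i : Fin g) : (T i).G →g (cycleTrees g T) where
  toFun := fun x => ⟨i, x⟩
  map_rel' := fun h => adj_tree h

variable (hg : 3 ≤ g) (hT : ∀ i, (T i).G.IsTree)

include hT in
lemma tree_walk (i : Fin g) (x y : (T i).V) :
    ∃ p : (cycleTrees g T).Walk ⟨i,x⟩ ⟨i,y⟩, p.length = dT T i x y := by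
  obtain ⟨q, hq⟩ := ((hT i).isConnected x y).exists_walk_length_eq_dist
  exact ⟨(q.map (homT i)).copy rfl rfl, (Walk.length_copy _ _ _).trans ((Walk.length_map _ _).trans hq)⟩

include hg hT in
lemma cyc_walk (i : Fin g) (k : ℕ) :
    ∃ p : (cycleTrees g T).Walk (rt T i) (rt T (i + (k : Fin g))), p.length = k := by
  induction k generalizing i with
  | zero => exact ⟨Walk.nil.copy rfl (by simp), by simp⟩
  | succ k ih =>
      obtain ⟨p, hp⟩ := ih (i+1)
      have hcast : i + ((k+1 : ℕ) : Fin g) = (i + 1) + (k : Fin g) := by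
        push_cast; ring
      refine ⟨(Walk.cons (adj_cyc hg i) p).copy rfl (by rw [hcast]), by simp [hp]⟩

include hg hT in
lemma dist_root_le (c a : Fin g) :
    (cycleTrees g T).dist (rt T c) (rt T a) ≤ dC c a := by
  have h1 : (cycleTrees g T).dist (rt T c) (rt T a) ≤ (a - c).val := by
    obtain ⟨p, hp⟩ := cyc_walk hg hT c (a - c).val
    have hle := SimpleGraph.dist_le p
    have hA : c + (((a - c).val : ℕ) : Fin g) = a := by
      rw [Fin.cast_val_eq_self]; exact add_sub_cancel c a
    rw [hp] at hle
    rw [hA] at hle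
    omega
  have h2 : (cycleTrees g T).dist (rt T c) (rt T a) ≤ (c - a).val := by
    obtain ⟨p, hp⟩ := cyc_walk hg hT a (c - a).val
    have hle := SimpleGraph.dist_le p
    have hA : a + (((c - a).val : ℕ) : Fin g) = c := by
      rw [Fin.cast_val_eq_self]; exact add_sub_cancel a c
    rw [hp] at hle
    rw [hA] at hle
    rw [SimpleGraph.dist_comm]
    omega
  exact le_min h1 h2

include hg hT in
lemma conn : (cycleTrees g T).Connected := by
  rw [SimpleGraph.connected_iff]
  constructor
  · intro w w'
    obtain ⟨i, z⟩ := w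
    obtain ⟨j, z'⟩ := w'
    have r1 : (cycleTrees g T).Reachable ⟨i,z⟩ (rt T i) := by
      obtain ⟨p, -⟩ := tree_walk hT i z (T i).root; exact ⟨p⟩
    have r2 : (cycleTrees g T).Reachable (rt T i) (rt T j) := by
      obtain ⟨p, -⟩ := cyc_walk hg hT i (j - i).val
      have hA : i + (((j - i).val : ℕ) : Fin g) = j := by
        rw [Fin.cast_val_eq_self]; exact add_sub_cancel i j
      rw [hA] at p
      exact ⟨p⟩
    have r3 : (cycleTrees g T).Reachable (rt T j) ⟨j,z'⟩ := by
      obtain ⟨p, -⟩ := tree_walk hT j (T j).root z'; exact ⟨p⟩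
    exact (r1.trans r2).trans r3
  · exact ⟨rt T 0⟩

variable (T) in
/-- candidate distance function to the target `⟨a, x⟩`. -/
noncomputable def Fd (a : Fin g) (x : (T a).V) (w : Σ i, (T i).V) : ℕ :=
  dT T w.1 w.2 (if h : a = w.1 then h ▸ x else (T w.1).root) +
    (if a = w.1 then 0 else dC w.1 a + dT T a (T a).root x)

lemma Fd_self (a : Fin g) (x : (T a).V) : Fd T a x ⟨a, x⟩ = 0 := by
  unfold Fd dT
  simp

lemma Fd_same (a : Fin g) (x z : (T a).V) : Fd T a x ⟨a, z⟩ = dT T a z x := by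
  unfold Fd
  simp

lemma Fd_diff (a : Fin g) (x : (T a).V) (c : Fin g) (z : (T c).V) (hca : c ≠ a) :
    Fd T a x ⟨c, z⟩ = dT T c z (T c).root + dC c a + dT T a (T a).root x := by
  unfold Fd
  rw [dif_neg (Ne.symm hca), if_neg (Ne.symm hca)]
  ring

lemma Fd_root (a : Fin g) (x : (T a).V) (i : Fin g) :
    Fd T a x (rt T i) = dC i a + dT T a (T a).root x := by
  by_cases h : i = a
  · subst h
    rw [show rt T i = ⟨i, (T i).root⟩ from rfl, Fd_same, dC_self]
    unfold dT
    rw [SimpleGraph.dist_comm]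
    simp
  · rw [show rt T i = ⟨i, (T i).root⟩ from rfl, Fd_diff a x i _ h]
    unfold dT
    simp

include hT in
lemma dT_lip (i : Fin g) {z z' : (T i).V} (h : (T i).G.Adj z z') (t : (T i).V) :
    dT T i z t ≤ dT T i z' t + 1 := by
  unfold dT
  calc (T i).G.dist z t ≤ (T i).G.dist z z' + (T i).G.dist z' t := (hT i).isConnected.dist_triangle
  _ ≤ 1 + (T i).G.dist z' t := by
      have := SimpleGraph.dist_le (Walk.cons h Walk.nil)
      simp only [Walk.length_cons, Walk.length_nil] at this
      omega
  _ = (T i).G.dist z' t + 1 := by ring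

include hg in
lemma dC_step (i a : Fin g) : dC i a ≤ dC (i+1) a + 1 ∧ dC (i+1) a ≤ dC i a + 1 := by
  obtain ⟨k, hk, rfl⟩ := fin_decomp i a
  by_cases hk1 : k + 1 < g
  · have h1 : a + (k : Fin g) + 1 = a + ((k+1 : ℕ) : Fin g) := by push_cast; ring
    rw [h1, dC_offset a k hk, dC_offset a (k+1) hk1]
    omega
  · have hkg : k = g - 1 := by omega
    have h1 : a + (k : Fin g) + 1 = a := by
      subst hkg
      rw [add_assoc]
      have : ((g - 1 : ℕ) : Fin g) + 1 = ((g - 1 + 1 : ℕ) : Fin g) := by push_cast; ring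
      rw [this, show g - 1 + 1 = g by omega, Fin.natCast_self, add_zero]
    rw [h1, dC_offset a k hk, dC_self]
    have : 3 ≤ g := hg
    omega

include hg hT in
lemma Fd_lip (a : Fin g) (x : (T a).V) :
    ∀ w w', (cycleTrees g T).Adj w w' → Fd T a x w ≤ Fd T a x w' + 1 := by
  intro w w' hadj
  rcases adj_cases hg hadj with ⟨i, z, z', rfl, rfl, hzz⟩ | ⟨h1, h2, h3⟩
  · by_cases h : i = a
    · subst h
      rw [Fd_same, Fd_same]
      exact dT_lip hT i hzz _
    · rw [Fd_diff a x i _ h, Fd_diff a x i _ h]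
      have := dT_lip hT i hzz (T i).root
      omega
  · obtain ⟨i, z⟩ := w
    obtain ⟨j, z'⟩ := w'
    dsimp only at h1 h2 h3
    subst h1
    subst h2
    rw [show (⟨i, (T i).root⟩ : Σ i, (T i).V) = rt T i from rfl,
        show (⟨j, (T j).root⟩ : Σ i, (T i).V) = rt T j from rfl, Fd_root, Fd_root]
    rcases h3 with h3 | h3
    · rw [h3]
      have := dC_step hg i a
      omega
    · rw [h3]
      have := dC_step hg j a
      omega

include hg hT in
lemma dist_eq_Fd (a : Fin g) (x : (T a).V) (w : Σ i, (T i).V) :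
    (cycleTrees g T).dist w ⟨a, x⟩ = Fd T a x w := by
  have hub : (cycleTrees g T).dist w ⟨a, x⟩ ≤ Fd T a x w := by
    obtain ⟨c, z⟩ := w
    by_cases h : c = a
    · subst h
      rw [Fd_same]
      obtain ⟨p, hp⟩ := tree_walk hT c z x
      exact hp ▸ SimpleGraph.dist_le p
    · rw [Fd_diff a x c z h]
      have t1 : (cycleTrees g T).dist ⟨c,z⟩ (rt T c) ≤ dT T c z (T c).root := by
        obtain ⟨p, hp⟩ := tree_walk hT c z (T c).root
        exact hp ▸ SimpleGraph.dist_le p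
      have t2 := dist_root_le hg hT c a
      have t3 : (cycleTrees g T).dist (rt T a) ⟨a,x⟩ ≤ dT T a (T a).root x := by
        obtain ⟨p, hp⟩ := tree_walk hT a (T a).root x
        exact hp ▸ SimpleGraph.dist_le p
      calc (cycleTrees g T).dist ⟨c,z⟩ ⟨a,x⟩
          ≤ (cycleTrees g T).dist ⟨c,z⟩ (rt T c) + (cycleTrees g T).dist (rt T c) ⟨a,x⟩ :=
            (conn hg hT).dist_triangle
        _ ≤ (cycleTrees g T).dist ⟨c,z⟩ (rt T c) + ((cycleTrees g T).dist (rt T c) (rt T a) +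
              (cycleTrees g T).dist (rt T a) ⟨a,x⟩) := by
            have := (conn hg hT).dist_triangle (u := rt T c) (v := rt T a) (w := (⟨a,x⟩ : Σ i, (T i).V))
            omega
        _ ≤ dT T c z (T c).root + dC c a + dT T a (T a).root x := by omega
  have hlb : Fd T a x w ≤ (cycleTrees g T).dist w ⟨a, x⟩ := by
    have := lip_dist (G := cycleTrees g T) (Fd T a x) (Fd_lip hg hT a x)
      ((conn hg hT).preconnected w ⟨a,x⟩)
    rw [Fd_self] at this
    omega
  omega

include hg hT in
lemma dist_same (i : Fin g) (z z' : (T i).V) :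
    (cycleTrees g T).dist ⟨i,z⟩ ⟨i,z'⟩ = dT T i z z' := by
  rw [dist_eq_Fd hg hT, Fd_same]

include hg hT in
lemma dist_diff {c a : Fin g} (hca : c ≠ a) (z : (T c).V) (x : (T a).V) :
    (cycleTrees g T).dist ⟨c,z⟩ ⟨a,x⟩
      = dT T c z (T c).root + dC c a + dT T a (T a).root x := by
  rw [dist_eq_Fd hg hT, Fd_diff a x c z hca]

include hg hT in
lemma dist_to_root (c a : Fin g) (z : (T c).V) :
    (cycleTrees g T).dist ⟨c,z⟩ (rt T a) = dT T c z (T c).root + dC c a := by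
  rw [show rt T a = ⟨a, (T a).root⟩ from rfl, dist_eq_Fd hg hT]
  by_cases h : c = a
  · subst h
    rw [Fd_same, dC_self]
    omega
  · rw [Fd_diff a (T a).root c z h]
    unfold dT
    simp

end Graph

open SimpleGraph Finset

section Edges
variable {g : ℕ} [NeZero g] (T : Fin g → RootedGraph)

/-- tree edges of the `i`-th fiber, inside the big graph. -/
noncomputable def teImg (i : Fin g) : Finset (Sym2 (Σ i, (T i).V)) :=
  (edgeFinset' (T i).G).image (Sym2.map (fun x => (⟨i, x⟩ : Σ i, (T i).V)))

/-- the `a`-th cycle edge. -/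
def cycE (a : Fin g) : Sym2 (Σ i, (T i).V) := s(rt T a, rt T (a+1))

variable {T}

lemma sym2_map_mk_inj (i : Fin g) :
    Function.Injective (Sym2.map (fun x => (⟨i, x⟩ : Σ i, (T i).V))) := by
  intro e f h
  induction e with
  | _ x y =>
    induction f with
    | _ z w =>
      rw [Sym2.map_pair_eq, Sym2.map_pair_eq, Sym2.eq_iff] at h
      rw [Sym2.eq_iff]
      rcases h with ⟨h1, h2⟩ | ⟨h1, h2⟩
      · exact Or.inl ⟨eq_of_heq (Sigma.mk.inj_iff.mp h1).2, eq_of_heq (Sigma.mk.inj_iff.mp h2).2⟩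
      · exact Or.inr ⟨eq_of_heq (Sigma.mk.inj_iff.mp h1).2, eq_of_heq (Sigma.mk.inj_iff.mp h2).2⟩

lemma mem_teImg {i : Fin g} {e : Sym2 (Σ i, (T i).V)} :
    e ∈ teImg T i ↔ ∃ x y : (T i).V, (T i).G.Adj x y ∧ e = s(⟨i,x⟩,⟨i,y⟩) := by
  unfold teImg
  rw [Finset.mem_image]
  constructor
  · rintro ⟨f, hf, rfl⟩
    rw [mem_edgeFinset'] at hf
    induction f with
    | _ x y =>
      rw [SimpleGraph.mem_edgeSet] at hf
      exact ⟨x, y, hf, by rw [Sym2.map_pair_eq]⟩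
  · rintro ⟨x, y, hxy, rfl⟩
    exact ⟨s(x,y), by rw [mem_edgeFinset']; exact hxy, by rw [Sym2.map_pair_eq]⟩

lemma cycE_mem (hg : 3 ≤ g) (a : Fin g) : cycE T a ∈ edgeFinset' (cycleTrees g T) := by
  unfold cycE
  rw [mem_edgeFinset', SimpleGraph.mem_edgeSet]
  exact adj_cyc hg a

lemma teImg_subset (i : Fin g) : teImg T i ⊆ edgeFinset' (cycleTrees g T) := by
  intro e he
  rw [mem_teImg] at he
  obtain ⟨x, y, hxy, rfl⟩ := he
  rw [mem_edgeFinset', SimpleGraph.mem_edgeSet]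
  exact adj_tree hxy

lemma edge_decomp (hg : 3 ≤ g) :
    edgeFinset' (cycleTrees g T) =
      (Finset.univ.biUnion (teImg T)) ∪ Finset.univ.image (cycE T) := by
  apply Finset.ext
  intro e
  rw [Finset.mem_union, Finset.mem_biUnion, Finset.mem_image]
  constructor
  · intro he
    rw [mem_edgeFinset'] at he
    induction e with
    | _ w w' =>
      rw [SimpleGraph.mem_edgeSet] at he
      rcases adj_cases hg he with ⟨i, x, y, rfl, rfl, hxy⟩ | ⟨h1, h2, h3⟩
      · exact Or.inl ⟨i, Finset.mem_univ i, mem_teImg.mpr ⟨x, y, hxy, rfl⟩⟩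
      · obtain ⟨i, z⟩ := w
        obtain ⟨i', z'⟩ := w'
        dsimp only at h1 h2 h3
        subst h1; subst h2
        rcases h3 with h3 | h3
        · refine Or.inr ⟨i, Finset.mem_univ i, ?_⟩
          unfold cycE
          rw [← h3]
          rfl
        · refine Or.inr ⟨i', Finset.mem_univ i', ?_⟩
          unfold cycE
          rw [← h3, Sym2.eq_swap]
          rfl
  · rintro (⟨i, -, he⟩ | ⟨a, -, rfl⟩)
    · exact teImg_subset i he
    · exact cycE_mem hg a

lemma teImg_fst {i : Fin g} {e : Sym2 (Σ i, (T i).V)} (he : e ∈ teImg T i)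
    {w : Σ i, (T i).V} (hw : w ∈ e) : w.1 = i := by
  rw [mem_teImg] at he
  obtain ⟨x, y, -, rfl⟩ := he
  rw [Sym2.mem_iff] at hw
  rcases hw with rfl | rfl <;> rfl

lemma teImg_disj {i j : Fin g} (hij : i ≠ j) : Disjoint (teImg T i) (teImg T j) := by
  rw [Finset.disjoint_left]
  intro e hei hej
  induction e with
  | _ w w' =>
    have h1 := teImg_fst hei (Sym2.mem_mk_left w w')
    have h2 := teImg_fst hej (Sym2.mem_mk_left w w')
    exact hij (h1 ▸ h2 ▸ rfl)

lemma cycE_not_teImg (hg : 3 ≤ g) (a i : Fin g) : cycE T a ∉ teImg T i := by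
  intro h
  have h1 := teImg_fst h (Sym2.mem_mk_left _ _)
  have h2 := teImg_fst h (Sym2.mem_mk_right _ _)
  unfold rt at h1 h2
  dsimp only at h1 h2
  exact fin_add_one_ne hg a (h1.trans h2.symm)

lemma fin_two_ne_zero (hg : 3 ≤ g) : (a : Fin g) = a + 1 + 1 → False := by
  intro h
  have h2 : (0 : Fin g) = 1 + 1 := by
    have := add_left_cancel (a := a) (b := (0 : Fin g)) (c := 1 + 1)
      (by rw [add_zero, ← add_assoc, ← h])
    exact this
  have : ((1:Fin g) + 1).val = 2 := by
    rw [Fin.val_add, val_one_fin (by omega), Nat.mod_eq_of_lt (by omega)]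
  rw [← h2, Fin.val_zero] at this
  exact (by omega : (0:ℕ) ≠ 2) this

lemma cycE_inj (hg : 3 ≤ g) : Function.Injective (cycE T) := by
  intro a b h
  unfold cycE at h
  rw [Sym2.eq_iff] at h
  rcases h with ⟨h1, -⟩ | ⟨h1, h2⟩
  · exact congrArg Sigma.fst h1
  · have ha : a = b + 1 := congrArg Sigma.fst h1
    have hb : a + 1 = b := congrArg Sigma.fst h2
    rw [← hb] at ha
    exact absurd ha (fun h => absurd (fin_two_ne_zero hg h) (fun q => q))

/-- the number of edges of each tree. -/
lemma tree_numEdges (i : Fin g) (hT : ∀ i, (T i).G.IsTree) :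
    numEdges (T i).G + 1 = Fintype.card (T i).V := by
  classical
  haveI : Fintype ((T i).G.edgeSet) := (T i).G.edgeSet.toFinite.fintype
  have : edgeFinset' (T i).G = (T i).G.edgeFinset := by
    apply Finset.ext
    intro e
    rw [mem_edgeFinset', SimpleGraph.mem_edgeFinset]
  unfold numEdges
  rw [this]
  exact (hT i).card_edgeFinset

lemma numEdges_total (hg : 3 ≤ g) (hT : ∀ i, (T i).G.IsTree) :
    numEdges (cycleTrees g T) = (∑ i, numEdges (T i).G) + g := by
  classical
  unfold numEdges
  rw [edge_decomp hg]
  have hpair : ∀ x ∈ (Finset.univ : Finset (Fin g)), ∀ y ∈ Finset.univ, x ≠ y →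
      Disjoint (teImg T x) (teImg T y) := by
    intro i _ j _ hij
    exact teImg_disj hij
  have hdisj : Disjoint (Finset.univ.biUnion (teImg T)) (Finset.univ.image (cycE T)) := by
    rw [Finset.disjoint_right]
    rintro e he het
    rw [Finset.mem_image] at he
    obtain ⟨a, -, rfl⟩ := he
    rw [Finset.mem_biUnion] at het
    obtain ⟨i, -, hi⟩ := het
    exact cycE_not_teImg hg a i hi
  rw [Finset.card_union_of_disjoint hdisj, Finset.card_biUnion hpair,
    Finset.card_image_of_injective _ (cycE_inj hg)]
  simp only [Finset.card_univ, Fintype.card_fin]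
  congr 1
  apply Finset.sum_congr rfl
  intro i _
  unfold teImg
  rw [Finset.card_image_of_injective _ (sym2_map_mk_inj i)]

lemma card_vertices (hT : ∀ i, (T i).G.IsTree) :
    (∑ i, numEdges (T i).G) + g = Fintype.card (Σ i, (T i).V) := by
  rw [Fintype.card_sigma]
  have h : ∑ i, Fintype.card ((T i).V) = ∑ i, (numEdges (T i).G + 1) := by
    apply Finset.sum_congr rfl
    intro i _
    exact (tree_numEdges i hT).symm
  rw [h, Finset.sum_add_distrib, Finset.sum_const, smul_eq_mul, mul_one,
    Finset.card_univ, Fintype.card_fin]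

end Edges

open SimpleGraph Finset

section Ties
variable {g : ℕ} [NeZero g] {T : Fin g → RootedGraph}

lemma offset_eq_iff (a : Fin g) {k m : ℕ} (hk : k < g) (hm : m < g) :
    (a + (k : Fin g) = a + (m : Fin g)) ↔ k = m := by
  constructor
  · intro h
    have h2 : ((k : Fin g)) = (m : Fin g) := add_left_cancel h
    have := congrArg Fin.val h2
    rwa [Fin.val_cast_of_lt hk, Fin.val_cast_of_lt hm] at this
  · rintro rfl; rfl

lemma offset_eq_self_iff (a : Fin g) {k : ℕ} (hk : k < g) :
    (a + (k : Fin g) = a) ↔ k = 0 := by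
  have hg0 : 0 < g := Nat.pos_of_ne_zero (NeZero.ne g)
  rw [show (a : Fin g) = a + ((0 : ℕ) : Fin g) by simp]
  have h := offset_eq_iff (a := a) hk hg0
  constructor
  · intro hh
    apply (offset_eq_iff (a := a) hk hg0).mp
    simpa using hh
  · rintro rfl; simp

lemma tieV_iff (hg : 3 ≤ g) (a c : Fin g) :
    dC c a = dC c (a+1) ↔ (Odd g ∧ c = a + (((g+1)/2 : ℕ) : Fin g)) := by
  obtain ⟨k, hk, rfl⟩ := fin_decomp c a
  obtain ⟨h1, h2⟩ := dC_offsets hg a k hk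
  rw [h1, h2, offset_eq_iff (a := a) hk (by omega), Nat.odd_iff]
  split_ifs with h0
  · omega
  · omega

lemma dC_succ_left (hg : 3 ≤ g) (a : Fin g) {k : ℕ} (hk : k < g) :
    dC ((a + (k : Fin g)) + 1) a = if k = g - 1 then 0 else min (k+1) (g - (k+1)) := by
  by_cases hk1 : k = g - 1
  · rw [if_pos hk1]
    subst hk1
    have h1 : a + ((g - 1 : ℕ) : Fin g) + 1 = a := by
      rw [add_assoc]
      have : ((g - 1 : ℕ) : Fin g) + 1 = ((g - 1 + 1 : ℕ) : Fin g) := by push_cast; ring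
      rw [this, show g - 1 + 1 = g by omega, Fin.natCast_self, add_zero]
    rw [h1, dC_self]
  · rw [if_neg hk1]
    have h1 : a + (k : Fin g) + 1 = a + ((k + 1 : ℕ) : Fin g) := by push_cast; ring
    rw [h1, dC_offset a (k+1) (by omega)]

lemma dC_succ_both (hg : 3 ≤ g) (a : Fin g) {k : ℕ} (hk : k < g) :
    dC ((a + (k : Fin g)) + 1) (a + 1) = min k (g - k) := by
  have h1 : a + (k : Fin g) + 1 = (a + 1) + (k : Fin g) := by ring
  rw [h1, dC_offset (a+1) k hk]

lemma tieE_iff (hg : 3 ≤ g) (a c : Fin g) :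
    min (dC c a) (dC (c+1) a) = min (dC c (a+1)) (dC (c+1) (a+1)) ↔
      (c = a ∨ (¬ Odd g ∧ c = a + ((g/2 : ℕ) : Fin g))) := by
  obtain ⟨k, hk, rfl⟩ := fin_decomp c a
  obtain ⟨h1, h2⟩ := dC_offsets hg a k hk
  rw [h1, h2, dC_succ_left hg a hk, dC_succ_both hg a hk,
    offset_eq_self_iff a hk, offset_eq_iff (a := a) hk (by omega), Nat.odd_iff]
  split_ifs with hA hB hB <;> omega

end Ties

section M0
variable {g : ℕ} [NeZero g] {T : Fin g → RootedGraph}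

lemma evDist_mk (G' : SimpleGraph (Σ i, (T i).V)) (w w' u : Σ i, (T i).V) :
    evDist G' s(w,w') u = min (G'.dist w u) (G'.dist w' u) := rfl

variable (hg : 3 ≤ g) (hT : ∀ i, (T i).G.IsTree)
include hg hT

lemma evDist_te (c : Fin g) (z z' : (T c).V) (b : Fin g) :
    evDist (cycleTrees g T) s(⟨c,z⟩,⟨c,z'⟩) (rt T b)
      = min (dT T c z (T c).root) (dT T c z' (T c).root) + dC c b := by
  rw [evDist_mk, dist_to_root hg hT, dist_to_root hg hT]
  omega

lemma evDist_ce (c b : Fin g) :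
    evDist (cycleTrees g T) (cycE T c) (rt T b) = min (dC c b) (dC (c+1) b) := by
  unfold cycE
  rw [evDist_mk, show rt T c = ⟨c, (T c).root⟩ from rfl,
    show rt T (c+1) = ⟨c+1, (T (c+1)).root⟩ from rfl,
    dist_to_root hg hT, dist_to_root hg hT]
  unfold dT
  rw [SimpleGraph.dist_self, SimpleGraph.dist_self]
  omega

lemma evDist_to_vertex (c : Fin g) (z z' : (T c).V) (i : Fin g) (x : (T i).V) (hci : c ≠ i) :
    evDist (cycleTrees g T) s(⟨c,z⟩,⟨c,z'⟩) ⟨i,x⟩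
      = min (dT T c z (T c).root) (dT T c z' (T c).root) + dC c i + dT T i (T i).root x := by
  rw [evDist_mk, dist_diff hg hT hci, dist_diff hg hT hci]
  omega

lemma evDist_ce_vertex (c i : Fin g) (x : (T i).V) :
    evDist (cycleTrees g T) (cycE T c) ⟨i,x⟩
      = dT T i x (T i).root + min (dC i c) (dC i (c+1)) := by
  unfold cycE
  rw [evDist_mk]
  rw [SimpleGraph.dist_comm (u := rt T c), SimpleGraph.dist_comm (u := rt T (c+1))]
  rw [dist_to_root hg hT, dist_to_root hg hT]
  omega

/-- m0 of a cycle edge. -/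
lemma m0_cyc (a : Fin g) :
    m0 (cycleTrees g T) (rt T a) (rt T (a+1)) =
      if Odd g then 1 + numEdges (T (a + (((g+1)/2 : ℕ) : Fin g))).G else 2 := by
  classical
  unfold m0
  by_cases hodd : Odd g
  · rw [if_pos hodd]
    have hset : (edgeFinset' (cycleTrees g T)).filter
        (fun f => evDist (cycleTrees g T) f (rt T a) = evDist (cycleTrees g T) f (rt T (a+1)))
        = insert (cycE T a) (teImg T (a + (((g+1)/2 : ℕ) : Fin g))) := by
      ext f
      simp only [Finset.mem_filter, Finset.mem_insert]
      constructor
      · rintro ⟨hf, htie⟩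
        rw [edge_decomp hg, Finset.mem_union, Finset.mem_biUnion] at hf
        rcases hf with ⟨c, -, hc⟩ | hc
        · obtain ⟨x, y, hxy, rfl⟩ := mem_teImg.mp hc
          rw [evDist_te hg hT, evDist_te hg hT] at htie
          have hdc : dC c a = dC c (a+1) := by omega
          obtain ⟨-, rfl⟩ := (tieV_iff hg a c).mp hdc
          exact Or.inr (mem_teImg.mpr ⟨x, y, hxy, rfl⟩)
        · rw [Finset.mem_image] at hc
          obtain ⟨c, -, rfl⟩ := hc
          rw [evDist_ce hg hT, evDist_ce hg hT] at htie
          rcases (tieE_iff hg a c).mp htie with rfl | ⟨hno, -⟩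
          · exact Or.inl rfl
          · exact absurd hodd hno
      · rintro (rfl | hf)
        · refine ⟨cycE_mem hg a, ?_⟩
          rw [evDist_ce hg hT, evDist_ce hg hT]
          exact (tieE_iff hg a a).mpr (Or.inl rfl)
        · refine ⟨teImg_subset _ hf, ?_⟩
          obtain ⟨x, y, hxy, rfl⟩ := mem_teImg.mp hf
          rw [evDist_te hg hT, evDist_te hg hT]
          have hdc : dC (a + (((g+1)/2 : ℕ) : Fin g)) a = dC (a + (((g+1)/2 : ℕ) : Fin g)) (a+1) :=
            (tieV_iff hg a _).mpr ⟨hodd, rfl⟩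
          omega
    rw [hset, Finset.card_insert_of_notMem (cycE_not_teImg hg a _)]
    unfold teImg
    rw [Finset.card_image_of_injective _ (sym2_map_mk_inj _)]
    unfold numEdges
    omega
  · rw [if_neg hodd]
    have hne : cycE T a ≠ cycE T (a + ((g/2 : ℕ) : Fin g)) := by
      intro h
      have := cycE_inj hg h
      have h0 : a + ((0:ℕ) : Fin g) = a + ((g/2 : ℕ) : Fin g) := by
        rw [Nat.cast_zero, add_zero]; exact this
      have := (offset_eq_iff (a := a) (by omega) (by omega)).mp h0
      rw [Nat.odd_iff] at hodd
      omega
    have hset : (edgeFinset' (cycleTrees g T)).filter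
        (fun f => evDist (cycleTrees g T) f (rt T a) = evDist (cycleTrees g T) f (rt T (a+1)))
        = {cycE T a, cycE T (a + ((g/2 : ℕ) : Fin g))} := by
      ext f
      simp only [Finset.mem_filter, Finset.mem_insert, Finset.mem_singleton]
      constructor
      · rintro ⟨hf, htie⟩
        rw [edge_decomp hg, Finset.mem_union, Finset.mem_biUnion] at hf
        rcases hf with ⟨c, -, hc⟩ | hc
        · obtain ⟨x, y, hxy, rfl⟩ := mem_teImg.mp hc
          rw [evDist_te hg hT, evDist_te hg hT] at htie
          have hdc : dC c a = dC c (a+1) := by omega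
          obtain ⟨ho, -⟩ := (tieV_iff hg a c).mp hdc
          exact absurd ho hodd
        · rw [Finset.mem_image] at hc
          obtain ⟨c, -, rfl⟩ := hc
          rw [evDist_ce hg hT, evDist_ce hg hT] at htie
          rcases (tieE_iff hg a c).mp htie with rfl | ⟨-, rfl⟩
          · exact Or.inl rfl
          · exact Or.inr rfl
      · rintro (rfl | rfl)
        · refine ⟨cycE_mem hg a, ?_⟩
          rw [evDist_ce hg hT, evDist_ce hg hT]
          exact (tieE_iff hg a a).mpr (Or.inl rfl)
        · refine ⟨cycE_mem hg _, ?_⟩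
          rw [evDist_ce hg hT, evDist_ce hg hT]
          exact (tieE_iff hg a _).mpr (Or.inr ⟨hodd, rfl⟩)
    rw [hset, Finset.card_insert_of_notMem (by simpa using hne), Finset.card_singleton]

/-- m0 of a tree edge. -/
lemma m0_te {i : Fin g} {x y : (T i).V} (hxy : (T i).G.Adj x y) :
    m0 (cycleTrees g T) ⟨i,x⟩ ⟨i,y⟩ = 1 := by
  classical
  unfold m0
  have hroot_ne : dT T i (T i).root x ≠ dT T i (T i).root y := by
    unfold dT
    exact tree_no_tie (hT i) hxy (T i).root
  have hset : (edgeFinset' (cycleTrees g T)).filter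
      (fun f => evDist (cycleTrees g T) f ⟨i,x⟩ = evDist (cycleTrees g T) f ⟨i,y⟩)
      = {s(⟨i,x⟩,⟨i,y⟩)} := by
    ext f
    simp only [Finset.mem_filter, Finset.mem_singleton]
    constructor
    · rintro ⟨hf, htie⟩
      rw [edge_decomp hg, Finset.mem_union, Finset.mem_biUnion] at hf
      rcases hf with ⟨c, -, hc⟩ | hc
      · obtain ⟨z, z', hzz, rfl⟩ := mem_teImg.mp hc
        by_cases hci : c = i
        · subst hci
          rw [evDist_mk, evDist_mk, dist_same hg hT, dist_same hg hT,
            dist_same hg hT, dist_same hg hT] at htie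
          by_cases hfe : s(z, z') = s(x, y)
          · rw [Sym2.eq_iff] at hfe
            rcases hfe with ⟨rfl, rfl⟩ | ⟨rfl, rfl⟩
            · rfl
            · rw [Sym2.eq_swap]
          · exfalso
            unfold dT at htie
            exact tree_edge_no_tie (hT c) hxy hzz hfe htie
        · exfalso
          rw [evDist_to_vertex hg hT c z z' i x hci,
            evDist_to_vertex hg hT c z z' i y hci] at htie
          exact hroot_ne (by omega)
      · exfalso
        rw [Finset.mem_image] at hc
        obtain ⟨c, -, rfl⟩ := hc
        rw [evDist_ce_vertex hg hT, evDist_ce_vertex hg hT] at htie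
        have hx' : dT T i x (T i).root = dT T i (T i).root x := by
          unfold dT; rw [SimpleGraph.dist_comm]
        have hy' : dT T i y (T i).root = dT T i (T i).root y := by
          unfold dT; rw [SimpleGraph.dist_comm]
        rw [hx', hy'] at htie
        exact hroot_ne (by omega)
    · rintro rfl
      refine ⟨?_, ?_⟩
      · rw [mem_edgeFinset', SimpleGraph.mem_edgeSet]
        exact adj_tree hxy
      · rw [evDist_mk, evDist_mk, dist_same hg hT, dist_same hg hT,
          dist_same hg hT, dist_same hg hT]
        unfold dT
        rw [SimpleGraph.dist_self, SimpleGraph.dist_self]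
        rw [SimpleGraph.dist_comm (u := y) (v := x)]
        omega
  rw [hset, Finset.card_singleton]

end M0

open SimpleGraph Finset

theorem stmt5' (g : ℕ) (hg : 3 ≤ g) (T : Fin g → RootedGraph) (hT : ∀ i, (T i).G.IsTree)
    (n : ℕ) (hn : Fintype.card (Σ i, (T i).V) = n) :
    revEdgeSzeged (cycleTrees g T) =
      edgeSzeged (cycleTrees g T) + (1 / 4 : ℚ) * n * (2 * n - 1)
        + (1 / 4 : ℚ) * (2 * n - 3) * g
        + (if Odd g then
            (1 / 4 : ℚ) * g * (5 - 4 * n) + ((n : ℚ) ^ 2 - n) / 2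
              - (1 / 4 : ℚ) * ∑ i, (numEdges (T i).G : ℚ) ^ 2
          else 0) := by
  classical
  haveI : NeZero g := ⟨by omega⟩
  set G := cycleTrees g T with hG
  -- number of edges
  have hN : numEdges G = n := by
    rw [numEdges_total hg hT, card_vertices hT, hn]
  -- abbreviation for tree edge counts
  set t : Fin g → ℕ := fun i => numEdges (T i).G with ht
  have hSt : (∑ i, t i) + g = n := by rw [← hn, ← card_vertices hT]
  have hSl : (∑ i, (t i : ℚ)) = (n : ℚ) - (g : ℚ) := by
    have : ((∑ i, t i : ℕ) : ℚ) = (n : ℚ) - (g : ℚ) := by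
      rw [show (∑ i, t i) = n - g by omega]
      have hgn : g ≤ n := by omega
      push_cast [hgn]
      ring
    rwa [Nat.cast_sum] at this
  -- the summand
  set ψ : Sym2 (Σ i, (T i).V) → ℚ :=
    fun e => ((numEdges G : ℚ) / 2 * (m0S G e : ℚ) - (m0S G e : ℚ)^2 / 4) with hψ
  have hsplit := rev_sub_edge G
  rw [← hψ] at hsplit
  -- split the sum over the edge decomposition
  have hpair : Set.PairwiseDisjoint (↑(Finset.univ : Finset (Fin g))) (teImg T) := by
    intro i _ j _ hij
    exact teImg_disj hij
  have hdisj : Disjoint (Finset.univ.biUnion (teImg T)) (Finset.univ.image (cycE T)) := by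
    rw [Finset.disjoint_right]
    rintro e he het
    rw [Finset.mem_image] at he
    obtain ⟨a, -, rfl⟩ := he
    rw [Finset.mem_biUnion] at het
    obtain ⟨i, -, hi⟩ := het
    exact cycE_not_teImg hg a i hi
  have hsum : ∑ e ∈ edgeFinset' G, ψ e =
      (∑ i, ∑ f ∈ teImg T i, ψ f) + ∑ a, ψ (cycE T a) := by
    rw [hG, edge_decomp hg, Finset.sum_union hdisj, Finset.sum_biUnion hpair,
      Finset.sum_image (fun a _ b _ h => cycE_inj hg h)]
  -- value of ψ on tree edges
  have htree : ∀ i : Fin g, ∑ f ∈ teImg T i, ψ f = (t i : ℚ) * ((n:ℚ)/2 - 1/4) := by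
    intro i
    have hconst : ∀ f ∈ teImg T i, ψ f = (n:ℚ)/2 - 1/4 := by
      intro f hf
      obtain ⟨x, y, hxy, rfl⟩ := mem_teImg.mp hf
      have h1 : m0S G s(⟨i,x⟩,⟨i,y⟩) = 1 := by
        rw [show m0S G s(⟨i,x⟩,⟨i,y⟩) = m0 G ⟨i,x⟩ ⟨i,y⟩ from rfl]
        exact m0_te hg hT hxy
      rw [hψ]
      dsimp only
      rw [h1, hN]
      push_cast
      ring
    rw [Finset.sum_congr rfl hconst, Finset.sum_const]
    have hcard : (teImg T i).card = t i := by
      unfold teImg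
      rw [Finset.card_image_of_injective _ (sym2_map_mk_inj i)]
      rfl
    rw [hcard, nsmul_eq_mul]
  have htreeSum : (∑ i, ∑ f ∈ teImg T i, ψ f) = (∑ i, (t i:ℚ)) * ((n:ℚ)/2 - 1/4) := by
    rw [Finset.sum_congr rfl (fun i _ => htree i), ← Finset.sum_mul]
  -- value of ψ on cycle edges
  have hcycval : ∀ a : Fin g, m0S G (cycE T a) =
      if Odd g then 1 + t (a + (((g+1)/2 : ℕ) : Fin g)) else 2 := by
    intro a
    rw [show m0S G (cycE T a) = m0 G (rt T a) (rt T (a+1)) from rfl]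
    exact m0_cyc hg hT a
  by_cases hodd : Odd g
  · -- odd case
    have hcyc : ∑ a, ψ (cycE T a) =
        ∑ a, ((n:ℚ)/2 * (1 + (t (a + (((g+1)/2 : ℕ) : Fin g)) : ℚ))
          - (1 + (t (a + (((g+1)/2 : ℕ) : Fin g)) : ℚ))^2/4) := by
      apply Finset.sum_congr rfl
      intro a _
      rw [hψ]
      dsimp only
      rw [hcycval a, if_pos hodd, hN]
      push_cast
      ring
    have hre : ∑ a, ((n:ℚ)/2 * (1 + (t (a + (((g+1)/2 : ℕ) : Fin g)) : ℚ))
          - (1 + (t (a + (((g+1)/2 : ℕ) : Fin g)) : ℚ))^2/4)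
        = ∑ b, ((n:ℚ)/2 * (1 + (t b : ℚ)) - (1 + (t b : ℚ))^2/4) := by
      exact Equiv.sum_comp (Equiv.addRight (((g+1)/2 : ℕ) : Fin g))
        (fun b => ((n:ℚ)/2 * (1 + (t b : ℚ)) - (1 + (t b : ℚ))^2/4))
    have hexp : ∑ b, ((n:ℚ)/2 * (1 + (t b : ℚ)) - (1 + (t b : ℚ))^2/4)
        = (g:ℚ) * ((n:ℚ)/2 - 1/4) + ((n:ℚ)/2 - 1/2) * (∑ b, (t b:ℚ))
          - (∑ b, (t b:ℚ)^2)/4 := by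
      have hterm : ∀ b ∈ (Finset.univ : Finset (Fin g)),
          ((n:ℚ)/2 * (1 + (t b : ℚ)) - (1 + (t b : ℚ))^2/4)
          = ((((n:ℚ)/2 - 1/4) + ((n:ℚ)/2 - 1/2) * (t b : ℚ)) - (t b:ℚ)^2/4) := by
        intro b _
        ring
      rw [Finset.sum_congr rfl hterm, Finset.sum_sub_distrib, Finset.sum_add_distrib,
        Finset.sum_const, ← Finset.mul_sum, ← Finset.sum_div]
      simp only [Finset.card_univ, Fintype.card_fin, nsmul_eq_mul]
      try ring
    rw [hsplit, hsum, htreeSum, hcyc, hre, hexp, if_pos hodd]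
    have hSq : (∑ i, (t i:ℚ)^2) = ∑ i, (numEdges (T i).G : ℚ)^2 := rfl
    rw [hSq] at *
    linear_combination ((n:ℚ) - 3/4) * hSl
  · -- even case
    have hcyc : ∑ a, ψ (cycE T a) = (g:ℚ) * ((n:ℚ) - 1) := by
      have hconst : ∀ a ∈ (Finset.univ : Finset (Fin g)), ψ (cycE T a) = (n:ℚ) - 1 := by
        intro a _
        rw [hψ]
        dsimp only
        rw [hcycval a, if_neg hodd, hN]
        push_cast
        ring
      rw [Finset.sum_congr rfl hconst, Finset.sum_const]
      simp only [Finset.card_univ, Fintype.card_fin, nsmul_eq_mul]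
    rw [hsplit, hsum, htreeSum, hcyc, if_neg hodd]
    linear_combination ((n:ℚ)/2 - 1/4) * hSl

end Aux

/-- For a unicyclic graph `G = C_g(T_1, …, T_g)` with `n` vertices,
`Sz*_e(G) = Sz_e(G) + (1/4)n(2n-1) + (1/4)(2n-3)g
  + δ(g)[(1/4)g(5-4n) + (n²-n)/2 - (1/4)Σᵢ |E(Tᵢ)|²]`,
where `δ(g) = 1` if `g` is odd and `0` if `g` is even. -/
theorem stmt5 (g : ℕ) (hg : 3 ≤ g) (T : Fin g → RootedGraph) (hT : ∀ i, (T i).G.IsTree)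
    (n : ℕ) (hn : Fintype.card (Σ i, (T i).V) = n) :
    revEdgeSzeged (cycleTrees g T) =
      edgeSzeged (cycleTrees g T) + (1 / 4 : ℚ) * n * (2 * n - 1)
        + (1 / 4 : ℚ) * (2 * n - 3) * g
        + (if Odd g then
            (1 / 4 : ℚ) * g * (5 - 4 * n) + ((n : ℚ) ^ 2 - n) / 2
              - (1 / 4 : ℚ) * ∑ i, (numEdges (T i).G : ℚ) ^ 2
          else 0) :=
  stmt5' g hg T hT n hn

end RevSzeged
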